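/- If θ is irrational, then for every real number φ not in ℤθ + ℤ, the inhomogeneous approximation constant L(θ,φ) = liminf_{|q|→∞} |q|·‖qθ − φ‖ (over nonzero integers q) satisfies L(θ,φ) ≤ 1/4. -/

import Mathlib

/-- Distance from a real number to the nearest integer. -/
noncomputable def distNearestInt (x : ℝ) : ℝ := |x - round x|

/-- The inhomogeneous approximation constant
`L(θ,φ) = liminf_{|q|→∞, q ∈ ℤ} |q|·‖qθ − φ‖`. -/
noncomputable def Lconst (θ φ : ℝ) : ℝ :=
  Filter.liminf (fun q : ℤ => |(q : ℝ)| * distNearestInt (q * θ - φ)) Filter.cofinite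

namespace MinkowskiAux

lemma distNearestInt_nonneg (x : ℝ) : 0 ≤ distNearestInt x := abs_nonneg _

lemma distNearestInt_le (x : ℝ) (n : ℤ) : distNearestInt x ≤ |x - n| :=
  round_le x n

/-- Core quadratic lemma: one of the two lattice points adjacent to zero works. -/
lemma core_half (γ σ u : ℝ) (hγ0 : 0 < γ) (hγ1 : γ < 1) (hσ0 : 0 ≤ σ) (hσr : σ ≤ 1 / 2)
    (hu0 : 0 ≤ u) (hu1 : u ≤ γ) :
    |u * (u - σ)| ≤ γ / 4 ∨ |(u - γ) * ((u - γ) - σ)| ≤ γ / 4 := by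
  by_contra hcon
  push_neg at hcon
  obtain ⟨h1, h2⟩ := hcon
  set v : ℝ := γ - u with hv
  have hv0 : 0 ≤ v := by simp [hv]; linarith
  have habs2 : |(u - γ) * ((u - γ) - σ)| = v * (v + σ) := by
    have : (u - γ) * ((u - γ) - σ) = v * (v + σ) := by ring
    rw [this, abs_of_nonneg (by positivity)]
  rw [habs2] at h2
  -- from h2 : γ/4 < v*(v+σ), get (2v+σ)^2 > γ + σ^2 and v > 0
  have hvpos : 0 < v := by nlinarith
  rcases le_or_gt u σ with hus | hus
  · -- u ≤ σ : |u*(u-σ)| = u*(σ-u)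
    have habs1 : |u * (u - σ)| = u * (σ - u) := by
      have : u * (u - σ) = -(u * (σ - u)) := by ring
      rw [this, abs_neg, abs_of_nonneg (by nlinarith)]
    rw [habs1] at h1
    have hupos : 0 < u := by nlinarith
    have hσpos : 0 < σ := lt_of_lt_of_le hupos hus
    -- s₁ = 2v+σ, s₂ = σ-2u; s₁²-s₂² > 2γ, s₁-s₂ = 2γ ⇒ s₁+s₂ > 1
    have hsum : 2 * v + 2 * σ - 2 * u > 1 := by nlinarith [sq_nonneg (σ - 2*u)]
    -- uσ > γ/4
    have huσ : u * σ > γ / 4 := by nlinarith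
    nlinarith
  · -- u > σ : |u*(u-σ)| = u*(u-σ)
    have habs1 : |u * (u - σ)| = u * (u - σ) := by
      rw [abs_of_nonneg (by nlinarith)]
    rw [habs1] at h1
    have ha : 0 < 2 * u - σ := by nlinarith
    have hb : 0 < 2 * v + σ := by nlinarith
    have ha2 : (2 * u - σ) ^ 2 > γ + σ ^ 2 := by nlinarith
    have hb2 : (2 * v + σ) ^ 2 > γ + σ ^ 2 := by nlinarith
    have hab : (2 * u - σ) * (2 * v + σ) > γ + σ ^ 2 := by nlinarith
    nlinarith

lemma core (γ σ u : ℝ) (hγ0 : 0 < γ) (hγ1 : γ < 1) (hσl : -(1 / 2) ≤ σ) (hσr : σ ≤ 1 / 2)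
    (hu0 : 0 ≤ u) (hu1 : u ≤ γ) :
    |u * (u - σ)| ≤ γ / 4 ∨ |(u - γ) * ((u - γ) - σ)| ≤ γ / 4 := by
  rcases le_or_gt 0 σ with hσ0 | hσ0
  · exact core_half γ σ u hγ0 hγ1 hσ0 hσr hu0 hu1
  · have h := core_half γ (-σ) (γ - u) hγ0 hγ1 (by linarith) (by linarith) (by linarith)
      (by linarith)
    rcases h with h | h
    · right
      have he : (γ - u) * (γ - u - -σ) = (u - γ) * (u - γ - σ) := by ring
      rwa [he] at h
    · left
      have he : (γ - u - γ) * (γ - u - γ - -σ) = u * (u - σ) := by ring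
      rwa [he] at h

lemma key (θ φ : ℝ) {p q : ℤ} (hq : 0 < q) (hcop : IsCoprime p q)
    (hD0 : (q : ℝ) * θ - p ≠ 0) (hDlt : |(q : ℝ) * θ - p| < 1 / q) :
    ∃ X : ℤ, |(X : ℝ)| * distNearestInt (X * θ - φ) ≤ 1 / 4 ∧
      distNearestInt (X * θ - φ) ≤ 2 / q := by
  have hqR : (0 : ℝ) < q := by exact_mod_cast hq
  set D : ℝ := (q : ℝ) * θ - p with hD
  have hDabs : 0 < |D| := abs_pos.mpr hD0
  set γ : ℝ := |D| * q with hγ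
  have hγ0 : 0 < γ := mul_pos hDabs hqR
  have hγ1 : γ < 1 := by
    have h : |D| * q < (1 / q) * q := mul_lt_mul_of_pos_right hDlt hqR
    rwa [one_div_mul_cancel (ne_of_gt hqR)] at h
  set b : ℤ := round (-((q : ℝ) * φ)) with hb
  set σ : ℝ := (q : ℝ) * φ + b with hσdef
  have hσ : |σ| ≤ 1 / 2 := by
    have h := abs_sub_round (-((q : ℝ) * φ))
    have h2 : -((q : ℝ) * φ) - b = -σ := by rw [hσdef]; ring
    rw [h2, abs_neg] at h
    exact h
  obtain ⟨a, c, hac⟩ := hcop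
  set X₀ : ℤ := -b * a with hX₀
  have hPX₀ : p * X₀ + b = q * (b * c) := by
    rw [hX₀]; linear_combination (-b) * hac
  have hPX₀r : (p : ℝ) * (X₀ : ℝ) + (b : ℝ) = (q : ℝ) * ((b : ℝ) * (c : ℝ)) := by
    exact_mod_cast hPX₀
  set s : ℤ := if 0 ≤ D then 1 else -1 with hs
  have hDs : D * (s : ℝ) = |D| := by
    rcases le_or_gt 0 D with h | h
    · rw [hs, if_pos h]; push_cast; rw [mul_one, abs_of_nonneg h]
    · rw [hs, if_neg (not_le.mpr h)]; push_cast; rw [abs_of_neg h]; ring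
  have hDsq : D * ((s : ℝ) * q) = γ := by rw [← mul_assoc, hDs, hγ]
  set k : ℤ := ⌊D * X₀ / γ⌋ with hk
  set u : ℝ := D * X₀ - k * γ with hu
  have hu0 : 0 ≤ u := by
    have h1 : (k : ℝ) ≤ D * X₀ / γ := Int.floor_le _
    have h2 := mul_le_mul_of_nonneg_right h1 (le_of_lt hγ0)
    rw [div_mul_cancel₀ _ (ne_of_gt hγ0)] at h2
    rw [hu]; linarith
  have hu1 : u ≤ γ := by
    have h1 : D * X₀ / γ < k + 1 := Int.lt_floor_add_one _
    have h2 := mul_lt_mul_of_pos_right h1 hγ0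
    rw [div_mul_cancel₀ _ (ne_of_gt hγ0)] at h2
    rw [hu]; nlinarith
  -- common final step
  have main : ∀ X : ℤ, (∃ m : ℤ, X = X₀ + m * q) →
      |D * X| ≤ γ → |(D * X) * (D * X - σ)| ≤ γ / 4 →
      |(X : ℝ)| * distNearestInt (X * θ - φ) ≤ 1 / 4 ∧
        distNearestInt (X * θ - φ) ≤ 2 / q := by
    rintro X ⟨m, rfl⟩ hAle hAval
    set X' : ℤ := X₀ + m * q with hX'
    set A : ℝ := D * X' with hA
    set Y : ℤ := b * c + p * m with hY
    have hkeyEq : (X' : ℝ) * θ - Y - φ = (A - σ) / q := by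
      rw [eq_div_iff (ne_of_gt hqR), hA, hσdef, hD, hX', hY]
      push_cast
      linear_combination hPX₀r
    have hdist : distNearestInt ((X' : ℝ) * θ - φ) ≤ |A - σ| / q := by
      have h := distNearestInt_le ((X' : ℝ) * θ - φ) Y
      have h2 : (X' : ℝ) * θ - φ - Y = (A - σ) / q := by rw [← hkeyEq]; ring
      rw [h2, abs_div, abs_of_pos hqR] at h
      exact h
    have hAσ : |A - σ| ≤ 2 := by
      have h3 : |A - σ| ≤ |A| + |σ| := abs_sub A σ
      linarith [hAle, hσ]
    refine ⟨?_, ?_⟩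
    · have hXabs : |(X' : ℝ)| = |A| / |D| := by
        rw [hA, abs_mul, mul_comm, mul_div_assoc, div_self (ne_of_gt hDabs), mul_one]
      calc |(X' : ℝ)| * distNearestInt ((X' : ℝ) * θ - φ)
          ≤ |(X' : ℝ)| * (|A - σ| / q) :=
            mul_le_mul_of_nonneg_left hdist (abs_nonneg _)
        _ = |A * (A - σ)| / γ := by
            rw [abs_mul, hXabs, hγ]; field_simp
        _ ≤ 1 / 4 := by rw [div_le_iff₀ hγ0]; linarith [hAval]
    · calc distNearestInt ((X' : ℝ) * θ - φ) ≤ |A - σ| / q := hdist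
        _ ≤ 2 / q := by gcongr
  -- apply the core lemma to the two candidates
  have hcore := MinkowskiAux.core γ σ u hγ0 hγ1 (neg_le_of_abs_le hσ) (le_of_abs_le hσ) hu0 hu1
  rcases hcore with hc | hc
  · have hXu : D * ((X₀ + -k * s * q : ℤ) : ℝ) = u := by
      push_cast
      rw [hu]
      linear_combination (-(k : ℝ)) * hDsq
    refine ⟨X₀ + -k * s * q, main _ ⟨-k * s, by ring⟩ ?_ ?_⟩
    · rw [show ((X₀ + -k * s * q : ℤ) : ℝ) = ((X₀ : ℝ) + (-k * s * q : ℤ)) by push_cast; ring] at *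
      rw [hXu, abs_of_nonneg hu0]
      exact hu1
    · rw [hXu]
      exact hc
  · have hXu : D * ((X₀ + -(k + 1) * s * q : ℤ) : ℝ) = u - γ := by
      push_cast
      rw [hu]
      linear_combination (-(k : ℝ) - 1) * hDsq
    refine ⟨X₀ + -(k + 1) * s * q, main _ ⟨-(k + 1) * s, by ring⟩ ?_ ?_⟩
    · rw [hXu, abs_of_nonpos (by linarith : u - γ ≤ 0)]
      linarith
    · rw [hXu]
      exact hc

lemma distNearestInt_pos (θ φ : ℝ) (hφ : ∀ a c : ℤ, φ ≠ a * θ + c) (X : ℤ) :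
    0 < distNearestInt ((X : ℝ) * θ - φ) := by
  rcases (distNearestInt_nonneg ((X : ℝ) * θ - φ)).lt_or_eq with h | h
  · exact h
  · exfalso
    have h0 : (X : ℝ) * θ - φ - round ((X : ℝ) * θ - φ) = 0 := by
      have := abs_eq_zero.mp h.symm
      linarith [this]
    apply hφ X (-round ((X : ℝ) * θ - φ))
    push_cast
    linarith [h0]

lemma exists_good_den (θ : ℝ) (hθ : Irrational θ) (B : ℕ) :
    ∃ r : ℚ, |θ - r| < 1 / (r.den : ℝ) ^ 2 ∧ B < r.den := by
  by_contra hcon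
  push_neg at hcon
  have hinf := Real.infinite_rat_abs_sub_lt_one_div_den_sq_of_irrational hθ
  apply hinf
  set M : ℤ := ⌈(|θ| + 1) * B⌉ with hM
  have hsub : {r : ℚ | |θ - r| < 1 / (r.den : ℝ) ^ 2} ⊆
      {r : ℚ | r.num ∈ Set.Icc (-M) M ∧ r.den ∈ Set.Iic B} := by
    intro r hr
    simp only [Set.mem_setOf_eq] at hr
    have hden : r.den ≤ B := hcon r hr
    have hden1 : (1 : ℝ) ≤ r.den := by exact_mod_cast r.pos
    have hsq : 1 / (r.den : ℝ) ^ 2 ≤ 1 := by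
      rw [div_le_one (by positivity)]
      nlinarith
    have hrabs : |(r : ℝ)| ≤ |θ| + 1 := by
      have h1 : |(r : ℝ)| ≤ |θ| + |θ - r| := by
        have := abs_sub_abs_le_abs_sub (r : ℝ) θ
        have h2 : |(r : ℝ) - θ| = |θ - r| := abs_sub_comm _ _
        linarith [abs_sub_abs_le_abs_sub (r : ℝ) θ, h2 ▸ this]
      linarith [hr.le.trans hsq]
    have hnum : |(r.num : ℝ)| ≤ (|θ| + 1) * B := by
      have hcast : (r.num : ℝ) = (r : ℝ) * r.den := by
        rw [Rat.cast_def]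
        field_simp
      rw [hcast, abs_mul, abs_of_nonneg (by positivity : (0:ℝ) ≤ (r.den : ℝ))]
      have hdenB : (r.den : ℝ) ≤ B := by exact_mod_cast hden
      have h0 : (0:ℝ) ≤ (r.den : ℝ) := by positivity
      nlinarith [abs_nonneg (r : ℝ)]
    have hnumM : |(r.num : ℝ)| ≤ (M : ℝ) := hnum.trans (Int.le_ceil _)
    have hnumM' : |r.num| ≤ M := by
      rw [← Int.cast_abs] at hnumM
      exact_mod_cast hnumM
    constructor
    · exact Set.mem_Icc.mpr (abs_le.mp hnumM')
    · exact Set.mem_Iic.mpr hden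
  apply Set.Finite.subset ?_ hsub
  apply Set.Finite.of_finite_image (f := fun r : ℚ => (r.num, r.den))
  · apply Set.Finite.subset ((Set.finite_Icc (-M) M).prod (Set.finite_Iic B))
    rw [Set.image_subset_iff]
    intro r hr
    exact ⟨hr.1, hr.2⟩
  · intro r₁ h₁ r₂ h₂ h
    simp only [Prod.mk.injEq] at h
    exact Rat.ext h.1 h.2

lemma S_infinite (θ φ : ℝ) (hθ : Irrational θ) (hφ : ∀ a c : ℤ, φ ≠ a * θ + c) :
    {X : ℤ | |(X : ℝ)| * distNearestInt ((X : ℝ) * θ - φ) ≤ 1 / 4}.Infinite := by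
  set S := {X : ℤ | |(X : ℝ)| * distNearestInt ((X : ℝ) * θ - φ) ≤ 1 / 4} with hS
  by_contra hfin
  rw [Set.not_infinite] at hfin
  have h0 : (0 : ℤ) ∈ S := by
    simp only [hS, Set.mem_setOf_eq, Int.cast_zero, abs_zero, zero_mul]
    norm_num
  obtain ⟨Z, hZS, hZmin⟩ := Set.exists_min_image S
    (fun X : ℤ => distNearestInt ((X : ℝ) * θ - φ)) hfin ⟨0, h0⟩
  set d : ℝ := distNearestInt ((Z : ℝ) * θ - φ) with hd
  have hdpos : 0 < d := distNearestInt_pos θ φ hφ Z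
  obtain ⟨r, hr1, hr2⟩ := exists_good_den θ hθ ⌈2 / d⌉₊
  have hqpos : (0 : ℤ) < (r.den : ℤ) := by exact_mod_cast r.pos
  have hqR : (0 : ℝ) < (r.den : ℝ) := by exact_mod_cast r.pos
  have hcop : IsCoprime (r.num) ((r.den : ℤ)) := by
    rw [Int.isCoprime_iff_gcd_eq_one]
    simpa [Int.gcd] using r.reduced
  have hcast : (r : ℝ) = (r.num : ℝ) / (r.den : ℝ) := by rw [Rat.cast_def]
  have hD0 : ((r.den : ℤ) : ℝ) * θ - (r.num : ℝ) ≠ 0 := by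
    intro h
    apply hθ.ne_rat r
    push_cast at h
    rw [hcast]
    field_simp
    linear_combination h
  have hDlt : |((r.den : ℤ) : ℝ) * θ - (r.num : ℝ)| < 1 / ((r.den : ℤ) : ℝ) := by
    have h1 : ((r.den : ℤ) : ℝ) * θ - (r.num : ℝ) = (θ - r) * r.den := by
      rw [hcast]; field_simp; push_cast; ring
    rw [h1, abs_mul, abs_of_pos hqR]
    calc |θ - (r : ℝ)| * r.den < 1 / (r.den : ℝ) ^ 2 * r.den :=
          mul_lt_mul_of_pos_right hr1 hqR
      _ = 1 / (r.den : ℝ) := by field_simp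
  obtain ⟨X, hX1, hX2⟩ := key θ φ hqpos hcop hD0 hDlt
  have hXS : X ∈ S := hX1
  have hge : d ≤ distNearestInt ((X : ℝ) * θ - φ) := hZmin X hXS
  have hlt : distNearestInt ((X : ℝ) * θ - φ) < d := by
    have hBd : 2 / d < (r.den : ℝ) := by
      have h1 : (2 / d : ℝ) ≤ (⌈2 / d⌉₊ : ℝ) := Nat.le_ceil _
      have h2 : ((⌈2 / d⌉₊ : ℕ) : ℝ) < (r.den : ℝ) := by exact_mod_cast hr2
      linarith
    have h3 : 2 / (r.den : ℝ) < d := by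
      rw [div_lt_iff₀ hqR]
      rw [div_lt_iff₀ hdpos] at hBd
      linarith [hBd]
    have hcc : (((r.den : ℤ)) : ℝ) = (r.den : ℝ) := by push_cast; ring
    rw [hcc] at hX2
    exact lt_of_le_of_lt hX2 h3
  linarith

end MinkowskiAux

theorem minkowski_inhomogeneous (θ : ℝ) (hθ : Irrational θ)
    (φ : ℝ) (hφ : ∀ a c : ℤ, φ ≠ a * θ + c) :
    Lconst θ φ ≤ 1 / 4 := by
  have hinf := MinkowskiAux.S_infinite θ φ hθ hφ
  have hfreq : ∃ᶠ X : ℤ in Filter.cofinite,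
      |(X : ℝ)| * distNearestInt ((X : ℝ) * θ - φ) ≤ 1 / 4 :=
    Filter.frequently_cofinite_iff_infinite.mpr hinf
  have hbdd : Filter.IsBoundedUnder (· ≥ ·) Filter.cofinite
      (fun X : ℤ => |(X : ℝ)| * distNearestInt ((X : ℝ) * θ - φ)) :=
    Filter.isBoundedUnder_of ⟨0, fun X =>
      mul_nonneg (abs_nonneg _) (MinkowskiAux.distNearestInt_nonneg _)⟩
  exact Filter.liminf_le_of_frequently_le hfreq hbdd
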